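/- Let A be an n×n adjacency matrix (a symmetric 0-1 integer matrix with zero diagonal) and let B be an n×n symmetric integer matrix. If A and B are generalized cospectral, then B is also an adjacency matrix: every entry of B is 0 or 1 and every diagonal entry of B is 0. -/

import Mathlib

open Matrix BigOperators

/-- An adjacency matrix: a symmetric 0-1 integer matrix with zero diagonal. -/
def IsAdjacencyMat {n : ℕ} (A : Matrix (Fin n) (Fin n) ℤ) : Prop :=
  A.IsSymm ∧ (∀ i j, A i j = 0 ∨ A i j = 1) ∧ (∀ i, A i i = 0)

/-- The walk matrix W = [e, Ae, ..., A^{n-1}e]. -/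
def walkMatrix {n : ℕ} (A : Matrix (Fin n) (Fin n) ℤ) : Matrix (Fin n) (Fin n) ℤ :=
  Matrix.of fun i j => ((A ^ (j : ℕ)) *ᵥ fun _ => (1 : ℤ)) i

/-- The all-ones matrix J. -/
def allOnes (n : ℕ) : Matrix (Fin n) (Fin n) ℤ := Matrix.of fun _ _ => 1

/-- Two symmetric integer matrices are generalized cospectral if they are cospectral and
their "complements" J - I - · are cospectral. -/
def GenCospectral {n : ℕ} (A B : Matrix (Fin n) (Fin n) ℤ) : Prop :=
  A.charpoly = B.charpoly ∧ (allOnes n - 1 - A).charpoly = (allOnes n - 1 - B).charpoly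

/-- Two (adjacency) matrices are isomorphic if Pᵀ A P = B for some permutation matrix P. -/
def IsomorphicMat {n : ℕ} (A B : Matrix (Fin n) (Fin n) ℤ) : Prop :=
  ∃ σ : Equiv.Perm (Fin n),
    (σ.toPEquiv.toMatrix : Matrix (Fin n) (Fin n) ℤ)ᵀ * A * σ.toPEquiv.toMatrix = B

/-- A graph (given by its adjacency matrix) is determined by its generalized spectrum. -/
def IsDGS {n : ℕ} (A : Matrix (Fin n) (Fin n) ℤ) : Prop :=
  ∀ B : Matrix (Fin n) (Fin n) ℤ, IsAdjacencyMat B → GenCospectral A B → IsomorphicMat A B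

/-- Membership in the family F_n^p : det W = ±2^⌊n/2⌋ p² b with b odd square-free positive,
p ∤ b, and rank of W over ℤ/pℤ equals n - 1. -/
def MemF {n : ℕ} (p : ℕ) (A : Matrix (Fin n) (Fin n) ℤ) : Prop :=
  IsAdjacencyMat A ∧
  (∃ b : ℤ, 0 < b ∧ Odd b ∧ Squarefree b ∧ ¬ ((p : ℤ) ∣ b) ∧
    ((walkMatrix A).det = 2 ^ (n / 2) * (p : ℤ) ^ 2 * b ∨
     (walkMatrix A).det = -(2 ^ (n / 2) * (p : ℤ) ^ 2 * b))) ∧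
  ((walkMatrix A).map (Int.cast : ℤ → ZMod p)).rank = n - 1

/-- A regular orthogonal matrix: QᵀQ = I and Qe = e. -/
def IsRegularOrthogonal {n : ℕ} (Q : Matrix (Fin n) (Fin n) ℚ) : Prop :=
  Qᵀ * Q = 1 ∧ (Q *ᵥ fun _ => (1 : ℚ)) = fun _ => 1

/-- The level of a rational matrix Q is the smallest positive integer k
such that kQ is an integer matrix. -/
def HasLevel {n : ℕ} (Q : Matrix (Fin n) (Fin n) ℚ) (ℓ : ℕ) : Prop :=
  IsLeast {k : ℕ | 0 < k ∧ ∀ i j, ∃ m : ℤ, (k : ℚ) * Q i j = (m : ℚ)} ℓ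

/-- A primitive matrix: a regular rational orthogonal matrix of level p such that
the integer matrix pQ has rank 1 over ℤ/pℤ. -/
def IsPrimitiveMat {n : ℕ} (p : ℕ) (Q : Matrix (Fin n) (Fin n) ℚ) : Prop :=
  IsRegularOrthogonal Q ∧ HasLevel Q p ∧
  ∃ M : Matrix (Fin n) (Fin n) ℤ,
    M.map (Int.cast : ℤ → ℚ) = (p : ℚ) • Q ∧
    (M.map (Int.cast : ℤ → ZMod p)).rank = 1

/-- A primitive matrix Q is generated from an integer vector v if every column of the
integer matrix pQ is congruent modulo p to an integer multiple of v. -/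
def GeneratedFrom {n : ℕ} (p : ℕ) (Q : Matrix (Fin n) (Fin n) ℚ) (v : Fin n → ℤ) : Prop :=
  IsPrimitiveMat p Q ∧
  ∀ M : Matrix (Fin n) (Fin n) ℤ, M.map (Int.cast : ℤ → ℚ) = (p : ℚ) • Q →
    ∀ j, ∃ c : ℤ, ∀ i, ((M i j : ℤ) : ZMod p) = (c : ZMod p) * ((v i : ℤ) : ZMod p)

/-- w is a perfect p-representative of v: w ≡ v (mod p), wᵀe = p and wᵀw = p². -/
def IsPerfectRep {n : ℕ} (p : ℕ) (v w : Fin n → ℤ) : Prop :=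
  (∀ i, ((w i : ℤ) : ZMod p) = ((v i : ℤ) : ZMod p)) ∧
  (∑ i, w i) = (p : ℤ) ∧ (∑ i, w i * w i) = (p : ℤ) ^ 2

/-- u is the shortest p-representative of v: u ≡ v (mod p) and |uᵢ| ≤ (p-1)/2 for all i. -/
def IsShortestRep {n : ℕ} (p : ℕ) (v u : Fin n → ℤ) : Prop :=
  (∀ i, ((u i : ℤ) : ZMod p) = ((v i : ℤ) : ZMod p)) ∧ ∀ i, |u i| ≤ ((p : ℤ) - 1) / 2

section Aux
open Polynomial

variable {n : ℕ}

lemma aux_charpoly_conj {m : Type*} [Fintype m] [DecidableEq m] {R : Type*} [CommRing R]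
    (U V N : Matrix m m R) (hUV : U * V = 1) (hVU : V * U = 1) :
    (U * N * V).charpoly = N.charpoly := by
  have hmapUV : U.map (C : R → R[X]) * V.map C = 1 := by
    rw [← Matrix.map_mul (f := (C : R →+* R[X])), hUV]
    ext i j
    by_cases hij : i = j <;> simp [hij, Matrix.one_apply, Matrix.map_apply]
  have h1 : U.map (C : R → R[X]) * Matrix.scalar m (X : R[X]) * V.map C
      = Matrix.scalar m (X : R[X]) := by
    rw [← (Matrix.scalar_commute (X : R[X]) (fun r => Commute.all _ _) (U.map C)).eq,
      mul_assoc, hmapUV, mul_one]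
  have h2 : charmatrix (U * N * V) = U.map C * charmatrix N * V.map C := by
    rw [charmatrix, charmatrix, RingHom.mapMatrix_apply, RingHom.mapMatrix_apply,
      Matrix.mul_sub, Matrix.sub_mul, h1,
      Matrix.map_mul (f := (C : R →+* R[X])), Matrix.map_mul (f := (C : R →+* R[X]))]
  have hdet : (U.map (C : R → R[X])).det * (V.map C).det = 1 := by
    rw [← Matrix.det_mul, hmapUV, Matrix.det_one]
  rw [Matrix.charpoly, Matrix.charpoly, h2, Matrix.det_mul, Matrix.det_mul,
    mul_assoc, mul_comm (charmatrix N).det, ← mul_assoc, hdet, one_mul]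

lemma aux_charpoly_diagonal {m : Type*} [Fintype m] [DecidableEq m] {R : Type*} [CommRing R]
    (d : m → R) : (Matrix.diagonal d).charpoly = ∏ i, (X - C (d i)) := by
  have h : charmatrix (Matrix.diagonal d) = Matrix.diagonal fun i => X - C (d i) := by
    ext i j
    by_cases hij : i = j
    · subst hij; simp
    · simp [hij, Matrix.diagonal_apply_ne _ hij]
  rw [Matrix.charpoly, h, Matrix.det_diagonal]

lemma aux_herm_charpoly (M : Matrix (Fin n) (Fin n) ℝ) (hM : M.IsHermitian) :
    M.charpoly = ∏ i, (X - C (hM.eigenvalues i)) := by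
  have hU : (hM.eigenvectorUnitary : Matrix (Fin n) (Fin n) ℝ) *
      star (hM.eigenvectorUnitary : Matrix (Fin n) (Fin n) ℝ) = 1 :=
    Matrix.mem_unitaryGroup_iff.mp hM.eigenvectorUnitary.2
  have hU' : star (hM.eigenvectorUnitary : Matrix (Fin n) (Fin n) ℝ) *
      (hM.eigenvectorUnitary : Matrix (Fin n) (Fin n) ℝ) = 1 :=
    Matrix.mem_unitaryGroup_iff'.mp hM.eigenvectorUnitary.2
  conv_lhs => rw [hM.spectral_theorem, Unitary.conjStarAlgAut_apply]
  rw [aux_charpoly_conj _ _ _ hU hU', aux_charpoly_diagonal]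
  simp [Function.comp]

lemma aux_herm_trace (M : Matrix (Fin n) (Fin n) ℝ) (hM : M.IsHermitian) :
    M.trace = ∑ i, hM.eigenvalues i := by
  have hU' : star (hM.eigenvectorUnitary : Matrix (Fin n) (Fin n) ℝ) *
      (hM.eigenvectorUnitary : Matrix (Fin n) (Fin n) ℝ) = 1 :=
    Matrix.mem_unitaryGroup_iff'.mp hM.eigenvectorUnitary.2
  conv_lhs => rw [hM.spectral_theorem, Unitary.conjStarAlgAut_apply]
  rw [Matrix.trace_mul_comm, ← mul_assoc, hU', one_mul, Matrix.trace_diagonal]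
  simp

lemma aux_herm_trace_sq (M : Matrix (Fin n) (Fin n) ℝ) (hM : M.IsHermitian) :
    (M * M).trace = ∑ i, hM.eigenvalues i ^ 2 := by
  have hU' : star (hM.eigenvectorUnitary : Matrix (Fin n) (Fin n) ℝ) *
      (hM.eigenvectorUnitary : Matrix (Fin n) (Fin n) ℝ) = 1 :=
    Matrix.mem_unitaryGroup_iff'.mp hM.eigenvectorUnitary.2
  set U := (hM.eigenvectorUnitary : Matrix (Fin n) (Fin n) ℝ)
  set D : Matrix (Fin n) (Fin n) ℝ := Matrix.diagonal (RCLike.ofReal ∘ hM.eigenvalues) with hD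
  have h1 : M * M = U * (D * D) * star U := by
    conv_lhs => rw [hM.spectral_theorem, Unitary.conjStarAlgAut_apply]
    have e : U * D * star U * (U * D * star U) = U * D * (star U * U * (D * star U)) := by
      noncomm_ring
    rw [e, hU', one_mul]
    noncomm_ring
  rw [h1, Matrix.trace_mul_comm, ← mul_assoc, hU', one_mul, hD,
    Matrix.diagonal_mul_diagonal, Matrix.trace_diagonal]
  simp [pow_two]

lemma aux_isHermitian_of_symm_int (M : Matrix (Fin n) (Fin n) ℤ) (hM : M.IsSymm) :
    (M.map (Int.cast : ℤ → ℝ)).IsHermitian := by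
  ext i j
  simp only [Matrix.conjTranspose_apply, Matrix.map_apply, star_trivial]
  exact_mod_cast congrArg (Int.cast : ℤ → ℝ) (hM.apply i j)

lemma aux_traces_eq (M N : Matrix (Fin n) (Fin n) ℤ) (hM : M.IsSymm) (hN : N.IsSymm)
    (h : M.charpoly = N.charpoly) :
    M.trace = N.trace ∧ (M * M).trace = (N * N).trace := by
  set f : ℤ →+* ℝ := Int.castRingHom ℝ with hf
  have hermM := aux_isHermitian_of_symm_int M hM
  have hermN := aux_isHermitian_of_symm_int N hN
  have hcp : (M.map (Int.cast : ℤ → ℝ)).charpoly = (N.map (Int.cast : ℤ → ℝ)).charpoly := by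
    rw [show (Int.cast : ℤ → ℝ) = ⇑f from rfl, Matrix.charpoly_map, Matrix.charpoly_map, h]
  -- multiset of eigenvalues are equal
  have hprod : ∏ i, (X - C (hermM.eigenvalues i)) = ∏ i, (X - C (hermN.eigenvalues i)) := by
    rw [← aux_herm_charpoly _ hermM, ← aux_herm_charpoly _ hermN, hcp]
  rw [Finset.prod_eq_multiset_prod, Finset.prod_eq_multiset_prod] at hprod
  have hms : Finset.univ.val.map hermM.eigenvalues = Finset.univ.val.map hermN.eigenvalues := by
    have h2 := congrArg Polynomial.roots hprod
    rwa [show (Finset.univ.val.map fun i => X - C (hermM.eigenvalues i))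
        = ((Finset.univ.val.map hermM.eigenvalues).map fun a => X - C a) by
          rw [Multiset.map_map]; rfl,
      show (Finset.univ.val.map fun i => X - C (hermN.eigenvalues i))
        = ((Finset.univ.val.map hermN.eigenvalues).map fun a => X - C a) by
          rw [Multiset.map_map]; rfl,
      Polynomial.roots_multiset_prod_X_sub_C, Polynomial.roots_multiset_prod_X_sub_C] at h2
  have hsum : ∑ i, hermM.eigenvalues i = ∑ i, hermN.eigenvalues i := by
    rw [Finset.sum_eq_multiset_sum, Finset.sum_eq_multiset_sum, hms]
  have hsq : ∑ i, hermM.eigenvalues i ^ 2 = ∑ i, hermN.eigenvalues i ^ 2 := by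
    rw [Finset.sum_eq_multiset_sum, Finset.sum_eq_multiset_sum,
      show (Finset.univ.val.map fun i => hermM.eigenvalues i ^ 2)
        = ((Finset.univ.val.map hermM.eigenvalues).map fun a => a ^ 2) by
          rw [Multiset.map_map]; rfl,
      show (Finset.univ.val.map fun i => hermN.eigenvalues i ^ 2)
        = ((Finset.univ.val.map hermN.eigenvalues).map fun a => a ^ 2) by
          rw [Multiset.map_map]; rfl, hms]
  have tmap : ∀ P : Matrix (Fin n) (Fin n) ℤ,
      (P.map (Int.cast : ℤ → ℝ)).trace = (P.trace : ℝ) := by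
    intro P
    simp [Matrix.trace, Matrix.diag, Matrix.map_apply]
  have mmap : ∀ P : Matrix (Fin n) (Fin n) ℤ,
      (P.map (Int.cast : ℤ → ℝ)) * (P.map (Int.cast : ℤ → ℝ))
        = (P * P).map (Int.cast : ℤ → ℝ) := by
    intro P
    rw [show (Int.cast : ℤ → ℝ) = ⇑f from rfl, Matrix.map_mul]
  constructor
  · have e1 := aux_herm_trace _ hermM
    have e2 := aux_herm_trace _ hermN
    rw [tmap] at e1 e2
    have : (M.trace : ℝ) = (N.trace : ℝ) := by rw [e1, e2, hsum]
    exact_mod_cast this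
  · have e1 := aux_herm_trace_sq _ hermM
    have e2 := aux_herm_trace_sq _ hermN
    rw [mmap, tmap] at e1 e2
    have : ((M * M).trace : ℝ) = ((N * N).trace : ℝ) := by rw [e1, e2, hsq]
    exact_mod_cast this

end Aux


theorem stmt9 (n : ℕ) (A B : Matrix (Fin n) (Fin n) ℤ)
    (hA : IsAdjacencyMat A) (hB : B.IsSymm) (h : GenCospectral A B) :
    IsAdjacencyMat B := by
  obtain ⟨hAsym, hA01, hAdiag⟩ := hA
  set J := allOnes n with hJ
  have hJsym : Jᵀ = J := by ext i j; rfl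
  have hCA : (J - 1 - A).IsSymm := by
    unfold Matrix.IsSymm
    rw [Matrix.transpose_sub, Matrix.transpose_sub, Matrix.transpose_one, hJsym, hAsym.eq]
  have hCB : (J - 1 - B).IsSymm := by
    unfold Matrix.IsSymm
    rw [Matrix.transpose_sub, Matrix.transpose_sub, Matrix.transpose_one, hJsym, hB.eq]
  obtain ⟨t1, t2⟩ := aux_traces_eq A B hAsym hB h.1
  obtain ⟨-, t3⟩ := aux_traces_eq _ _ hCA hCB h.2
  have expand : ∀ M : Matrix (Fin n) (Fin n) ℤ,
      ((J - 1 - M) * (J - 1 - M)).trace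
        = (J * J).trace - 2 * J.trace + (1 : Matrix (Fin n) (Fin n) ℤ).trace
          + 2 * M.trace + (M * M).trace - 2 * (J * M).trace := by
    intro M
    have e : (J - 1 - M) * (J - 1 - M)
        = J * J - J - J * M - J + 1 + M - M * J + M + M * M := by noncomm_ring
    rw [e]
    simp only [Matrix.trace_add, Matrix.trace_sub]
    rw [Matrix.trace_mul_comm M J]
    ring
  rw [expand A, expand B] at t3
  have tsum : (J * A).trace = (J * B).trace := by linarith
  -- trace identities in terms of entries
  have htr : ∀ M : Matrix (Fin n) (Fin n) ℤ, M.trace = ∑ i, M i i := fun M => rfl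
  have hJtr : ∀ M : Matrix (Fin n) (Fin n) ℤ,
      (J * M).trace = ∑ i, ∑ k, M k i := by
    intro M
    simp [Matrix.trace, Matrix.diag, Matrix.mul_apply, hJ, allOnes]
  have hsqtr : ∀ M : Matrix (Fin n) (Fin n) ℤ,
      (M * M).trace = ∑ i, ∑ k, M i k * M k i := by
    intro M
    simp [Matrix.trace, Matrix.diag, Matrix.mul_apply]
  -- trace(A*A) = total sum of A
  have hAA : (A * A).trace = (J * A).trace := by
    rw [hsqtr, hJtr]
    refine Finset.sum_congr rfl fun i _ => Finset.sum_congr rfl fun k _ => ?_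
    rw [hAsym.apply i k]
    rcases hA01 i k with h0 | h0 <;> rw [h0] <;> ring
  -- hence entrywise sum identity for B
  have keysum : ∑ i, ∑ k, B i k * B k i = ∑ i, ∑ k, B k i := by
    have := t2.symm.trans (hAA.trans (tsum.trans (hJtr B)))
    rw [hsqtr] at this
    linarith [this]
  have key0 : ∑ p : Fin n × Fin n, (B p.1 p.2 * B p.1 p.2 - B p.1 p.2) = 0 := by
    rw [Finset.sum_sub_distrib]
    rw [Fintype.sum_prod_type, Fintype.sum_prod_type]
    have l : ∑ i, ∑ k, B i k * B i k = ∑ i, ∑ k, B k i := by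
      calc ∑ i, ∑ k, B i k * B i k = ∑ i, ∑ k, B i k * B k i := by
            refine Finset.sum_congr rfl fun i _ => Finset.sum_congr rfl fun k _ => ?_
            rw [hB.apply i k]
        _ = ∑ i, ∑ k, B k i := keysum
    rw [l]
    have l2 : ∑ i, ∑ k, B i k = ∑ i, ∑ k, B k i := by
      refine Finset.sum_congr rfl fun i _ => Finset.sum_congr rfl fun k _ => hB.apply i k |>.symm
    rw [l2, sub_self]
  have hnonneg : ∀ p ∈ Finset.univ (α := Fin n × Fin n),
      0 ≤ B p.1 p.2 * B p.1 p.2 - B p.1 p.2 := by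
    intro p _
    rcases le_or_gt (B p.1 p.2) 0 with hc | hc
    · nlinarith
    · have : 1 ≤ B p.1 p.2 := hc
      nlinarith
  have hzero := (Finset.sum_eq_zero_iff_of_nonneg hnonneg).mp key0
  have hB01 : ∀ i j, B i j = 0 ∨ B i j = 1 := by
    intro i j
    have := hzero (i, j) (Finset.mem_univ _)
    have h' : B i j * (B i j - 1) = 0 := by nlinarith
    rcases mul_eq_zero.mp h' with h'' | h''
    · exact Or.inl h''
    · exact Or.inr (by linarith)
  refine ⟨hB, hB01, ?_⟩
  -- diagonal
  have tB0 : ∑ i, B i i = 0 := by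
    have hA0 : A.trace = 0 := by
      rw [htr]
      exact Finset.sum_eq_zero fun i _ => hAdiag i
    have hb : B.trace = 0 := by rw [← t1]; exact hA0
    rw [htr] at hb
    exact hb
  have hnn : ∀ i ∈ Finset.univ (α := Fin n), (0 : ℤ) ≤ B i i := by
    intro i _
    rcases hB01 i i with h0 | h0 <;> rw [h0] <;> norm_num
  intro i
  exact (Finset.sum_eq_zero_iff_of_nonneg hnn).mp tB0 i (Finset.mem_univ i)
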